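/- Let Y be a closed subspace of a real Banach space X and let y₀ ∈ S_Y. If y₀ is not a weakly almost locally uniformly rotund (w-aLUR) point of S_Y, then y₀ is not a w-aLUR point of S_X. -/

import Mathlib

open Filter Topology NormedSpace

/-- `x` is a weakly almost locally uniformly rotund (w-aLUR) point of the unit sphere:
under the aLUR double-limit condition the sequence `{x_n}` converges weakly to `x`. -/
def WALURPoint {Z : Type*} [NormedAddCommGroup Z] [NormedSpace ℝ Z] (x : Z) : Prop :=
  ∀ (xs : ℕ → Z) (fs : ℕ → StrongDual ℝ Z) (α : ℕ → ℝ),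
    (∀ n, ‖xs n‖ = 1) → (∀ m, ‖fs m‖ = 1) →
    (∀ m, Tendsto (fun n => fs m ((2 : ℝ)⁻¹ • (xs n + x))) atTop (𝓝 (α m))) →
    Tendsto α atTop (𝓝 1) →
    ∀ g : StrongDual ℝ Z, Tendsto (fun n => g (xs n)) atTop (𝓝 (g x))

/-- If `y₀ ∈ S_Y` is not a w-aLUR point of the unit sphere of a closed subspace `Y` of `X`,
then `y₀` is not a w-aLUR point of the unit sphere of `X`. -/
theorem not_wALUR_of_subspace {X : Type*} [NormedAddCommGroup X] [NormedSpace ℝ X]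
    [CompleteSpace X] (Y : Subspace ℝ X) (hY : IsClosed (Y : Set X))
    (y₀ : Y) (hy₀ : ‖y₀‖ = 1) (h : ¬ WALURPoint y₀) :
    ¬ WALURPoint (y₀ : X) := by
  intro hX
  apply h
  intro ys fs α hys hfs hα hα1
  -- extend each fs m to X with the same norm
  choose Fs hFs hFsnorm using fun m => exists_extension_norm_eq Y (fs m)
  have key : ∀ g : StrongDual ℝ X, Tendsto (fun n => g ((ys n : X))) atTop (𝓝 (g (y₀ : X))) := by
    apply hX (fun n => (ys n : X)) Fs α
    · intro n; simpa using hys n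
    · intro m; rw [hFsnorm m]; exact hfs m
    · intro m
      have : ∀ n, Fs m ((2 : ℝ)⁻¹ • ((ys n : X) + (y₀ : X)))
          = fs m ((2 : ℝ)⁻¹ • (ys n + y₀)) := by
        intro n
        have : ((((2 : ℝ)⁻¹ • (ys n + y₀) : Y)) : X) = (2 : ℝ)⁻¹ • ((ys n : X) + (y₀ : X)) := by
          push_cast; ring
        rw [← this, hFs m]
      simpa only [this] using hα m
    · exact hα1
  intro g
  obtain ⟨G, hG, -⟩ := exists_extension_norm_eq Y g
  have := key G
  simpa only [hG] using this
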